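/- If a, b ∈ (0,1) satisfy log a / log b ∉ ℚ, then the closure of the set {a^m · b^n : m ∈ ℕ, n ∈ ℤ} intersected with [0,1] equals [0,1]. -/
import Mathlib


open Set Real

theorem closure_pow_products_inter_unit_interval
    (a b : ℝ) (ha : a ∈ Set.Ioo (0:ℝ) 1) (hb : b ∈ Set.Ioo (0:ℝ) 1)
    (hirr : Irrational (Real.log a / Real.log b)) :
    closure {x : ℝ | ∃ (m : ℕ) (n : ℤ), x = a ^ (m : ℤ) * b ^ n} ∩ Set.Icc (0:ℝ) 1
      = Set.Icc (0:ℝ) 1 := by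
  obtain ⟨ha0, ha1⟩ := ha
  obtain ⟨hb0, hb1⟩ := hb
  set α := Real.log a with hαdef
  set β := Real.log b with hβdef
  have hα : α < 0 := Real.log_neg ha0 ha1
  have hβ : β < 0 := Real.log_neg hb0 hb1
  set S : Set ℝ := {x : ℝ | ∃ (m : ℕ) (n : ℤ), x = a ^ (m : ℤ) * b ^ n} with hSdef
  set G₀ : AddSubgroup ℝ := AddSubgroup.zmultiples α ⊔ AddSubgroup.zmultiples β with hG₀
  -- the full ℤ-subgroup is dense
  have hdense : Dense (G₀ : Set ℝ) := by
    rcases AddSubgroup.dense_or_cyclic G₀ with h | ⟨g, hg⟩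
    · exact h
    · exfalso
      have hαm : α ∈ G₀ := AddSubgroup.mem_sup_left (AddSubgroup.mem_zmultiples α)
      have hβm : β ∈ G₀ := AddSubgroup.mem_sup_right (AddSubgroup.mem_zmultiples β)
      rw [hg] at hαm hβm
      obtain ⟨m, hm⟩ := AddSubgroup.mem_closure_singleton.mp hαm
      obtain ⟨n, hn⟩ := AddSubgroup.mem_closure_singleton.mp hβm
      have hg0 : g ≠ 0 := by
        rintro rfl; simp at hn; exact hβ.ne hn.symm
      have hn0 : (n : ℝ) ≠ 0 := by
        rintro h
        rw [← hn] at hβ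
        simp only [zsmul_eq_mul] at hβ
        rw [h, zero_mul] at hβ; exact lt_irrefl _ hβ
      apply hirr
      refine ⟨(m : ℚ) / (n : ℚ), ?_⟩
      rw [← hm, ← hn]
      simp only [zsmul_eq_mul]
      push_cast
      rw [mul_div_mul_right _ _ hg0]
  -- move to the circle ℝ / (-β)ℤ
  set p : ℝ := -β with hpdef
  haveI : Fact (0 < p) := ⟨by linarith⟩
  have hzmul : AddSubgroup.zmultiples p = AddSubgroup.zmultiples β := by
    ext x
    simp only [AddSubgroup.mem_zmultiples_iff, hpdef]
    constructor
    · rintro ⟨k, rfl⟩; exact ⟨-k, by simp⟩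
    · rintro ⟨k, rfl⟩; exact ⟨-k, by simp⟩
  let cq : ℝ → AddCircle p := fun x => (x : AddCircle p)
  have hcqcont : Continuous cq := continuous_quotient_mk'
  have hcqsurj : Function.Surjective cq := Quotient.mk''_surjective
  have hβ0 : (β : AddCircle p) = 0 := by
    have : β ∈ AddSubgroup.zmultiples p := by rw [hzmul]; exact AddSubgroup.mem_zmultiples β
    simpa [QuotientAddGroup.eq_zero_iff] using this
  -- ℤ-orbit of α is dense on the circle
  have hZ : DenseRange (fun n : ℤ => n • (α : AddCircle p)) := by
    have himg : Dense (cq '' (G₀ : Set ℝ)) :=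
      hcqsurj.denseRange.dense_image hcqcont hdense
    refine Dense.mono ?_ himg
    rintro _ ⟨x, hx, rfl⟩
    obtain ⟨y, hy, z, hz, rfl⟩ := AddSubgroup.mem_sup.mp hx
    obtain ⟨k, rfl⟩ := AddSubgroup.mem_zmultiples_iff.mp hy
    obtain ⟨l, rfl⟩ := AddSubgroup.mem_zmultiples_iff.mp hz
    refine ⟨k, ?_⟩
    show k • (α : AddCircle p) = ((k • α + l • β : ℝ) : AddCircle p)
    rw [QuotientAddGroup.mk_add, QuotientAddGroup.mk_zsmul, QuotientAddGroup.mk_zsmul, hβ0,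
      smul_zero, add_zero]
  -- hence the ℕ-orbit is dense
  have hN : DenseRange (fun m : ℕ => m • (α : AddCircle p)) :=
    denseRange_zsmul_iff_nsmul.mp hZ
  -- pull back to ℝ : T = {mα + nβ} is dense
  set T : Set ℝ := {x : ℝ | ∃ (m : ℕ) (n : ℤ), x = (m : ℝ) * α + (n : ℝ) * β} with hTdef
  have hTpre : T = cq ⁻¹' (Set.range (fun m : ℕ => m • (α : AddCircle p))) := by
    ext x
    simp only [hTdef, mem_setOf_eq, mem_preimage, Set.mem_range]
    constructor
    · rintro ⟨m, n, rfl⟩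
      refine ⟨m, ?_⟩
      show m • (α : AddCircle p) = (((m : ℝ) * α + (n : ℝ) * β : ℝ) : AddCircle p)
      rw [show (m : ℝ) * α = m • α from (nsmul_eq_mul m α).symm,
        show (n : ℝ) * β = n • β from (zsmul_eq_mul β n).symm,
        QuotientAddGroup.mk_add, QuotientAddGroup.mk_nsmul, QuotientAddGroup.mk_zsmul, hβ0,
        smul_zero, add_zero]
    · rintro ⟨m, hm⟩
      have : ((x : ℝ) : AddCircle p) = (((m : ℝ) * α : ℝ) : AddCircle p) := by
        rw [show (m : ℝ) * α = m • α from (nsmul_eq_mul m α).symm, QuotientAddGroup.mk_nsmul]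
        exact hm.symm
      rw [QuotientAddGroup.eq_iff_sub_mem, hzmul] at this
      obtain ⟨k, hk⟩ := AddSubgroup.mem_zmultiples_iff.mp this
      refine ⟨m, k, ?_⟩
      rw [zsmul_eq_mul] at hk
      linarith
  have hTdense : Dense T := by
    rw [hTpre]
    exact hN.preimage QuotientAddGroup.isOpenMap_coe
  -- exp maps T into S
  have hexp_zpow : ∀ (x : ℝ), 0 < x → ∀ n : ℤ, Real.exp ((n : ℝ) * Real.log x) = x ^ n := by
    intro x hx n
    rw [← Real.rpow_intCast x n, Real.rpow_def_of_pos hx, mul_comm]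
  have hexpT : Real.exp '' T ⊆ S := by
    rintro _ ⟨x, ⟨m, n, rfl⟩, rfl⟩
    refine ⟨m, n, ?_⟩
    have h1 := hexp_zpow a ha0 (m : ℤ)
    push_cast at h1
    rw [Real.exp_add, hαdef, hβdef, h1, hexp_zpow b hb0 n]
  -- positive reals are in the closure of S
  have h1 : Set.Ioi (0:ℝ) ⊆ closure S := by
    have h2 := image_closure_subset_closure_image (s := T) Real.continuous_exp
    rw [hTdense.closure_eq, Set.image_univ, Real.range_exp] at h2
    exact h2.trans (closure_mono hexpT)
  have h0 : (0:ℝ) ∈ closure S := by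
    have ht : Filter.Tendsto (fun n : ℕ => a ^ (((0:ℕ) : ℤ)) * b ^ (n : ℤ))
        Filter.atTop (nhds 0) := by
      have he : (fun n : ℕ => a ^ (((0:ℕ) : ℤ)) * b ^ (n : ℤ)) = fun n : ℕ => b ^ n := by
        funext n; simp [zpow_natCast]
      rw [he]
      exact tendsto_pow_atTop_nhds_zero_of_lt_one hb0.le hb1
    exact mem_closure_of_tendsto ht (Filter.Eventually.of_forall fun n => ⟨0, (n : ℤ), rfl⟩)
  refine Set.Subset.antisymm Set.inter_subset_right fun x hx => ⟨?_, hx⟩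
  rcases eq_or_lt_of_le hx.1 with heq | hlt
  · rw [← heq]; exact h0
  · exact h1 hlt
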